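/- Let 𝒩 be a finite set and let v : Finset 𝒩 → ℝ be monotone and submodular with v(∅)=0. Let S ⊆ 𝒩 be a finite set equipped with a linear order ≺, and for each i ∈ S define a(i) = v(P_i ∪ {i}) − v(P_i), where P_i = { j ∈ S : j ≺ i }. Then a(i) ≥ 0 for all i ∈ S, Σ_{i∈S} a(i) = v(S), and for every T ⊆ S one has Σ_{i∈T} a(i) ≤ v(T). -/
import Mathlib

lemma telesum14 {𝒩 : Type*} [LinearOrder 𝒩] (v : Finset 𝒩 → ℝ) (hzero : v ∅ = 0) :
    ∀ T : Finset 𝒩,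
      ∑ i ∈ T, (v (insert i (T.filter (fun j => j < i))) - v (T.filter (fun j => j < i)))
        = v T := by
  intro T
  induction T using Finset.strongInductionOn with
  | _ T ih =>
    rcases T.eq_empty_or_nonempty with rfl | hne
    · simp [hzero]
    · set m := T.max' hne with hm
      have hmem : m ∈ T := T.max'_mem hne
      have hfm : T.filter (fun j => j < m) = T.erase m := by
        ext x
        simp only [Finset.mem_filter, Finset.mem_erase]
        constructor
        · rintro ⟨hx, hlt⟩; exact ⟨ne_of_lt hlt, hx⟩
        · rintro ⟨hne', hx⟩
          exact ⟨hx, lt_of_le_of_ne (T.le_max' x hx) hne'⟩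
      have hins : insert m (T.erase m) = T := Finset.insert_erase hmem
      have key : ∀ i ∈ T.erase m,
          T.filter (fun j => j < i) = (T.erase m).filter (fun j => j < i) := by
        intro i hi
        ext x
        simp only [Finset.mem_filter, Finset.mem_erase]
        constructor
        · rintro ⟨hx, hlt⟩
          refine ⟨⟨?_, hx⟩, hlt⟩
          rintro rfl
          exact absurd (lt_of_lt_of_le hlt (T.le_max' i (Finset.mem_of_mem_erase hi)))
            (lt_irrefl _)
        · rintro ⟨⟨_, hx⟩, hlt⟩; exact ⟨hx, hlt⟩
      rw [← hins, Finset.sum_insert (Finset.notMem_erase m T)]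
      rw [hins]
      have h2 : ∑ i ∈ T.erase m,
          (v (insert i (T.filter (fun j => j < i))) - v (T.filter (fun j => j < i)))
          = v (T.erase m) := by
        rw [← ih (T.erase m) (Finset.erase_ssubset hmem)]
        exact Finset.sum_congr rfl fun i hi => by rw [key i hi]
      rw [h2, hfm, hins]
      ring

theorem stmt14 {𝒩 : Type*} [Fintype 𝒩] [LinearOrder 𝒩]
    (v : Finset 𝒩 → ℝ)
    (hzero : v ∅ = 0)
    (hnonneg : ∀ T : Finset 𝒩, 0 ≤ v T)
    (hmono : ∀ A B : Finset 𝒩, A ⊆ B → v A ≤ v B)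
    (hsubmod : ∀ (A B : Finset 𝒩) (i : 𝒩), A ⊆ B →
      v (insert i B) - v B ≤ v (insert i A) - v A)
    (S : Finset 𝒩)
    (a : 𝒩 → ℝ)
    -- a i is the marginal value of i over its predecessors in S
    (ha : ∀ i ∈ S,
      a i = v (insert i (S.filter (fun j => j < i))) - v (S.filter (fun j => j < i))) :
    (∀ i ∈ S, 0 ≤ a i) ∧
    (∑ i ∈ S, a i = v S) ∧
    (∀ T ⊆ S, ∑ i ∈ T, a i ≤ v T) := by
  refine ⟨?_, ?_, ?_⟩
  · intro i hi
    rw [ha i hi]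
    have := hmono (S.filter (fun j => j < i)) (insert i (S.filter (fun j => j < i)))
      (Finset.subset_insert _ _)
    linarith
  · rw [Finset.sum_congr rfl ha]
    exact telesum14 v hzero S
  · intro T hT
    calc ∑ i ∈ T, a i
        ≤ ∑ i ∈ T, (v (insert i (T.filter (fun j => j < i)))
            - v (T.filter (fun j => j < i))) := by
          refine Finset.sum_le_sum fun i hi => ?_
          rw [ha i (hT hi)]
          exact hsubmod _ _ i (Finset.filter_subset_filter _ hT)
      _ = v T := telesum14 v hzero T
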